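/- Let x₁, …, x_n ∈ ℂ and for k = 1, 2 let f_{i,k} be holomorphic functions defined near x_i with f_{i,k}(x_i) = x_{i+1 mod n} and f_{i,k}'(x_i) = λ_i (the same λ_i for k = 1 and k = 2), where |λ_1·λ_2⋯λ_n| > 1. Define the cyclic compositions g_{i,k} = f_{i+n−1 mod n, k} ∘ ⋯ ∘ f_{i+1 mod n, k} ∘ f_{i,k}, and suppose there is q ≥ 1 such that g_{i,1}^q = g_{i,2}^q near x_i for every i. Then f_{i,1} = f_{i,2} in a neighborhood of x_i for every i. -/

import Mathlib

open Filter Topology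

/-- The composition `f (i + (m-1)) ∘ ⋯ ∘ f (i + 1) ∘ f i` around the cycle,
starting at index `i`, with `m` factors. -/
def cyclicComp {n : ℕ} (f : ZMod n → ℂ → ℂ) (i : ZMod n) : ℕ → ℂ → ℂ
  | 0 => id
  | m + 1 => f (i + (m : ZMod n)) ∘ cyclicComp f i m

lemma coeff_comp_eq (P A : FormalMultilinearSeries ℂ ℂ ℂ) (m : ℕ) :
    (P.comp A).coeff m
      = ∑ c : Composition m, (∏ i, A.coeff (c.blocksFun i)) * P.coeff c.length := by
  show (P.comp A) m (fun _ => 1) = _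
  rw [FormalMultilinearSeries.comp]
  rw [ContinuousMultilinearMap.sum_apply]
  refine Finset.sum_congr rfl fun c _ => ?_
  rw [FormalMultilinearSeries.compAlongComposition_apply]
  have h1 : A.applyComposition c (fun _ => 1) = fun i => A.coeff (c.blocksFun i) := rfl
  rw [h1]
  have := FormalMultilinearSeries.apply_eq_prod_smul_coeff (p := P) (n := c.length)
    (y := fun i => A.coeff (c.blocksFun i))
  rw [this, smul_eq_mul]

lemma blocksFun_lt_of_one_lt_length {m : ℕ} (c : Composition m) (hc : 1 < c.length)
    (i : Fin c.length) : c.blocksFun i < m := by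
  classical
  obtain ⟨j, hj⟩ := Fintype.exists_ne_of_one_lt_card (by simpa using hc) i
  calc c.blocksFun i < ∑ k, c.blocksFun k :=
        Finset.single_lt_sum hj (Finset.mem_univ _) (Finset.mem_univ _)
          (c.one_le_blocksFun j) fun k _ _ => Nat.zero_le _
    _ = m := c.sum_blocksFun

lemma formal_key (ν : ℂ) (hν : ∀ m : ℕ, 2 ≤ m → ν ^ m ≠ ν)
    (P P' A B : FormalMultilinearSeries ℂ ℂ ℂ)
    (hP1 : P.coeff 1 = ν) (hP'1 : P'.coeff 1 = ν)
    (hA0 : A.coeff 0 = 0) (hB0 : B.coeff 0 = 0) (hAB1 : A.coeff 1 = B.coeff 1)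
    (hA : P.comp A = A.comp P') (hB : P.comp B = B.comp P') :
    ∀ m, A.coeff m = B.coeff m := by
  intro m
  induction m using Nat.strong_induction_on with
  | _ m ih =>
    match m with
    | 0 => rw [hA0, hB0]
    | 1 => exact hAB1
    | (k + 2) =>
      set m := k + 2 with hmdef
      have hm : 0 < m := by omega
      have hm2 : 2 ≤ m := by omega
      have hL : (P.comp A).coeff m - (P.comp B).coeff m
          = (A.coeff m - B.coeff m) * ν := by
        rw [coeff_comp_eq, coeff_comp_eq, ← Finset.sum_sub_distrib,
          Finset.sum_eq_single_of_mem (Composition.single m hm) (Finset.mem_univ _)]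
        · simp only [Composition.single_blocksFun, Finset.prod_const, Finset.card_univ, Fintype.card_fin]
          simp [Composition.single_blocksFun, Composition.single_length, hP1, sub_mul]
        · intro c _ hne
          have hlen1 : c.length ≠ 1 := fun h =>
            hne ((Composition.eq_single_iff_length hm).2 h)
          have hlen : 1 < c.length := by
            have := Composition.length_pos_of_pos c hm
            omega
          have heq : ∀ i, A.coeff (c.blocksFun i) = B.coeff (c.blocksFun i) :=
            fun i => ih _ (blocksFun_lt_of_one_lt_length c hlen i)
          simp [heq]
      have hR : (A.comp P').coeff m - (B.comp P').coeff m
          = (A.coeff m - B.coeff m) * ν ^ m := by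
        rw [coeff_comp_eq, coeff_comp_eq, ← Finset.sum_sub_distrib,
          Finset.sum_eq_single_of_mem (Composition.ones m) (Finset.mem_univ _)]
        · simp [Composition.ones_blocksFun, Composition.ones_length, hP'1, mul_sub, mul_comm]
        · intro c _ hne
          have hlen : c.length < m := lt_of_le_of_ne c.length_le
            (fun h => hne (Composition.eq_ones_iff_length.2 h))
          rw [ih _ hlen]
          simp
      have hEq : (A.coeff m - B.coeff m) * ν = (A.coeff m - B.coeff m) * ν ^ m := by
        rw [← hL, ← hR, hA, hB]
      have hD : (A.coeff m - B.coeff m) * (ν - ν ^ m) = 0 := by linear_combination hEq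
      rcases mul_eq_zero.1 hD with h | h
      · exact sub_eq_zero.1 h
      · exact absurd (sub_eq_zero.1 h).symm (hν m hm2)

lemma pow_ne_self_of_one_lt_norm {ν : ℂ} (h : 1 < ‖ν‖) :
    ∀ m : ℕ, 2 ≤ m → ν ^ m ≠ ν := by
  intro m hm he
  have hnorm : ‖ν‖ ^ m = ‖ν‖ := by rw [← norm_pow, he]
  have h2 : ‖ν‖ ^ 2 ≤ ‖ν‖ ^ m := pow_le_pow_right₀ (le_of_lt h) hm
  nlinarith [h]

lemma cyclicComp_succ' {n : ℕ} (f : ZMod n → ℂ → ℂ) (i : ZMod n) (m : ℕ) :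
    cyclicComp f i (m + 1) = cyclicComp f (i + 1) m ∘ f i := by
  induction m with
  | zero => simp [cyclicComp]
  | succ m ih =>
    have h1 : cyclicComp f i (m + 1 + 1)
        = f (i + ((m + 1 : ℕ) : ZMod n)) ∘ cyclicComp f i (m + 1) := rfl
    have h2 : cyclicComp f (i + 1) (m + 1)
        = f ((i + 1) + (m : ZMod n)) ∘ cyclicComp f (i + 1) m := rfl
    have h3 : i + ((m + 1 : ℕ) : ZMod n) = (i + 1) + (m : ZMod n) := by push_cast; ring
    rw [h1, ih, h2, h3]
    rfl

lemma cyclicComp_cycle {n : ℕ} [NeZero n] (f : ZMod n → ℂ → ℂ) (i : ZMod n) :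
    cyclicComp f (i + 1) n ∘ f i = f i ∘ cyclicComp f i n := by
  rw [← cyclicComp_succ']
  show f (i + (n : ZMod n)) ∘ cyclicComp f i n = _
  rw [ZMod.natCast_self, add_zero]

lemma prod_cycle {n : ℕ} [NeZero n] (lam : ZMod n → ℂ) (i : ZMod n) :
    ∏ j ∈ Finset.range n, lam (i + (j : ZMod n)) = ∏ u : ZMod n, lam u := by
  rw [← Fin.prod_univ_eq_prod_range (fun j => lam (i + (j : ZMod n))) n]
  have hbij : Function.Bijective (fun j : Fin n => i + ((j : ℕ) : ZMod n)) := by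
    have hinj : Function.Injective (fun j : Fin n => i + ((j : ℕ) : ZMod n)) := by
      intro a b hab
      simp only [add_right_inj] at hab
      have ha := ZMod.val_cast_of_lt a.isLt
      have hb := ZMod.val_cast_of_lt b.isLt
      exact Fin.ext (by rw [← ha, ← hb, hab])
    exact (Fintype.bijective_iff_injective_and_card _).2 ⟨hinj, by simp [ZMod.card]⟩
  exact Fintype.prod_bijective _ hbij (fun j => lam (i + ((j : ℕ) : ZMod n))) lam fun j => rfl

/-- If two cyclic systems of holomorphic germs `f_{i,k}`, `k = 1, 2`, share the cycle
`x_i`, have the same multipliers `λ_i` at `x_i` with `|λ_1⋯λ_n| > 1`, and their cyclic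
compositions `g_{i,k}` satisfy `g_{i,1}^q = g_{i,2}^q` near `x_i`, then
`f_{i,1} = f_{i,2}` near each `x_i`. -/
theorem cyclic_koenigs_rigidity
    (n : ℕ) [NeZero n] (x : ZMod n → ℂ)
    (f : Fin 2 → ZMod n → ℂ → ℂ) (lam : ZMod n → ℂ)
    (hanal : ∀ k i, AnalyticAt ℂ (f k i) (x i))
    (hfix : ∀ k i, f k i (x i) = x (i + 1))
    (hder : ∀ k i, deriv (f k i) (x i) = lam i)
    (hmul : 1 < ‖∏ i : ZMod n, lam i‖)
    (q : ℕ) (hq : 1 ≤ q)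
    (hg : ∀ i : ZMod n, ∀ᶠ z in 𝓝 (x i),
      (cyclicComp (f 0) i n)^[q] z = (cyclicComp (f 1) i n)^[q] z) :
    ∀ i : ZMod n, ∀ᶠ z in 𝓝 (x i), f 0 i z = f 1 i z := by
  set μ : ℂ := ∏ i : ZMod n, lam i with hμdef
  have hν : ∀ m : ℕ, 2 ≤ m → μ ^ m ≠ μ := pow_ne_self_of_one_lt_norm hmul
  -- properties of cyclic compositions at the base points
  have hcyc : ∀ (k : Fin 2) (i : ZMod n) (m : ℕ),
      cyclicComp (f k) i m (x i) = x (i + (m : ZMod n))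
      ∧ AnalyticAt ℂ (cyclicComp (f k) i m) (x i)
      ∧ deriv (cyclicComp (f k) i m) (x i) = ∏ j ∈ Finset.range m, lam (i + (j : ZMod n)) := by
    intro k i m
    induction m with
    | zero => exact ⟨by simp [cyclicComp], analyticAt_id, by simp [cyclicComp]⟩
    | succ m ih =>
      obtain ⟨hv, ha, hd⟩ := ih
      have hfa : AnalyticAt ℂ (f k (i + (m : ZMod n))) (cyclicComp (f k) i m (x i)) := by
        rw [hv]; exact hanal k _
      have hcast : (i + (m : ZMod n)) + 1 = i + ((m + 1 : ℕ) : ZMod n) := by push_cast; ring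
      refine ⟨?_, ?_, ?_⟩
      · show f k (i + (m : ZMod n)) (cyclicComp (f k) i m (x i)) = _
        rw [hv, hfix, hcast]
      · exact hfa.comp ha
      · show deriv (f k (i + (m : ZMod n)) ∘ cyclicComp (f k) i m) (x i) = _
        rw [deriv_comp _ hfa.differentiableAt ha.differentiableAt, hv, hder, hd,
          Finset.prod_range_succ, mul_comm]
  -- translated germs at 0
  set F : Fin 2 → ZMod n → ℂ → ℂ := fun k i z => f k i (x i + z) - x (i + 1) with hFdef
  set G : Fin 2 → ZMod n → ℂ → ℂ := fun k i z => cyclicComp (f k) i n (x i + z) - x i with hGdef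
  have hFval : ∀ k i, F k i 0 = 0 := by intro k i; simp [hFdef, hfix]
  have hGval : ∀ k i, G k i 0 = 0 := by
    intro k i
    have := (hcyc k i n).1
    simp only [hGdef, add_zero, this, ZMod.natCast_self, sub_eq_zero]
  have htrans : ∀ (u : ℂ → ℂ) (a b : ℂ), AnalyticAt ℂ u a →
      AnalyticAt ℂ (fun z => u (a + z) - b) 0 := by
    intro u a b hu
    have h1 : AnalyticAt ℂ (fun z : ℂ => a + z) 0 := analyticAt_const.add analyticAt_id
    have h2 : AnalyticAt ℂ u ((fun z : ℂ => a + z) 0) := by simpa using hu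
    exact (h2.comp h1).sub analyticAt_const
  have hFanal : ∀ k i, AnalyticAt ℂ (F k i) 0 := fun k i => htrans _ _ _ (hanal k i)
  have hGanal : ∀ k i, AnalyticAt ℂ (G k i) 0 := fun k i => htrans _ _ _ (hcyc k i n).2.1
  have hdtrans : ∀ (u : ℂ → ℂ) (a b : ℂ), deriv (fun z => u (a + z) - b) 0 = deriv u a := by
    intro u a b
    rw [deriv_sub_const, deriv_comp_const_add, add_zero]
  have hFderiv : ∀ k i, deriv (F k i) 0 = lam i := by
    intro k i
    rw [hFdef]
    rw [hdtrans, hder]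
  have hGderiv : ∀ k i, deriv (G k i) 0 = μ := by
    intro k i
    rw [hGdef]
    rw [hdtrans, (hcyc k i n).2.2, prod_cycle]
  have hring : ∀ a w : ℂ, a + (w - a) = w := fun a w => by ring
  have hcomm : ∀ (k : Fin 2) (i : ZMod n) (z : ℂ), G k (i + 1) (F k i z) = F k i (G k i z) := by
    intro k i z
    have hkey := congrFun (cyclicComp_cycle (f k) i) (x i + z)
    simp only [Function.comp_apply] at hkey
    show cyclicComp (f k) (i + 1) n (x (i + 1) + (f k i (x i + z) - x (i + 1))) - x (i + 1)
        = f k i (x i + (cyclicComp (f k) i n (x i + z) - x i)) - x (i + 1)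
    rw [hring, hring, hkey]
  have hGiter : ∀ (k : Fin 2) (i : ZMod n) (m : ℕ) (z : ℂ),
      (G k i)^[m] z = (cyclicComp (f k) i n)^[m] (x i + z) - x i := by
    intro k i m
    induction m with
    | zero => intro z; simp
    | succ m ih =>
      intro z
      rw [Function.iterate_succ_apply', Function.iterate_succ_apply', ih]
      show cyclicComp (f k) i n (x i + ((cyclicComp (f k) i n)^[m] (x i + z) - x i)) - x i = _
      rw [hring]
  have hiter : ∀ (k : Fin 2) (i : ZMod n) (m : ℕ),
      AnalyticAt ℂ ((G k i)^[m]) 0 ∧ (G k i)^[m] 0 = 0 ∧ deriv ((G k i)^[m]) 0 = μ ^ m := by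
    intro k i m
    induction m with
    | zero => exact ⟨by simpa using analyticAt_id, by simp, by simp⟩
    | succ m ih =>
      obtain ⟨ha, hv, hd⟩ := ih
      have hga : AnalyticAt ℂ (G k i) ((G k i)^[m] 0) := by rw [hv]; exact hGanal k i
      refine ⟨?_, ?_, ?_⟩
      · rw [Function.iterate_succ']
        exact hga.comp ha
      · rw [Function.iterate_succ_apply', hv, hGval]
      · rw [Function.iterate_succ']
        show deriv (G k i ∘ (G k i)^[m]) 0 = _
        rw [deriv_comp _ hga.differentiableAt ha.differentiableAt, hv, hGderiv, hd, pow_succ,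
          mul_comm]
  -- choose power series
  have hGex : ∀ (k : Fin 2) (i : ZMod n), ∃ p, HasFPowerSeriesAt (G k i) p 0 :=
    fun k i => hGanal k i
  choose GA hGA using hGex
  have hFex : ∀ (k : Fin 2) (i : ZMod n), ∃ p, HasFPowerSeriesAt (F k i) p 0 :=
    fun k i => hFanal k i
  choose FA hFA using hFex
  -- basic coefficient facts
  have hcoeff0G : ∀ k i, (GA k i).coeff 0 = 0 := by
    intro k i
    have := (hGA k i).coeff_zero 1
    rw [hGval] at this
    exact this
  have hcoeff0F : ∀ k i, (FA k i).coeff 0 = 0 := by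
    intro k i
    have := (hFA k i).coeff_zero 1
    rw [hFval] at this
    exact this
  have hcoeff1G : ∀ k i, (GA k i).coeff 1 = μ := by
    intro k i
    have := (hGA k i).deriv
    rw [hGderiv] at this
    exact this.symm
  have hcoeff1F : ∀ k i, (FA k i).coeff 1 = lam i := by
    intro k i
    have := (hFA k i).deriv
    rw [hFderiv] at this
    exact this.symm
  have seriesext : ∀ (A B : FormalMultilinearSeries ℂ ℂ ℂ),
      (∀ m, A.coeff m = B.coeff m) → A = B := by
    intro A B h
    funext m
    rw [← FormalMultilinearSeries.mkPiRing_coeff_eq A, h m,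
      FormalMultilinearSeries.mkPiRing_coeff_eq B]
  -- Step 1: the cyclic compositions have equal power series
  have hstep1 : ∀ i, GA 0 i = GA 1 i := by
    intro i
    obtain ⟨Q, hQ⟩ : ∃ p, HasFPowerSeriesAt ((G 0 i)^[q]) p 0 := (hiter 0 i q).1
    have hg' : (G 0 i)^[q] =ᶠ[𝓝 (0 : ℂ)] (G 1 i)^[q] := by
      have hmap : Tendsto (fun z : ℂ => x i + z) (𝓝 0) (𝓝 (x i)) := by
        have : Continuous (fun z : ℂ => x i + z) := continuous_const.add continuous_id
        simpa using this.tendsto 0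
      filter_upwards [hmap.eventually (hg i)] with z hz
      rw [hGiter, hGiter, hz]
    have hQ1 : HasFPowerSeriesAt ((G 1 i)^[q]) Q 0 := hQ.congr hg'
    have hQcoeff1 : Q.coeff 1 = μ ^ q := by
      have := hQ.deriv
      rw [(hiter 0 i q).2.2] at this
      exact this.symm
    have hcommQ : ∀ (k : Fin 2) (hQk : HasFPowerSeriesAt ((G k i)^[q]) Q 0),
        Q.comp (GA k i) = (GA k i).comp Q := by
      intro k hQk
      have h1 : HasFPowerSeriesAt ((G k i)^[q] ∘ G k i) (Q.comp (GA k i)) 0 := by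
        refine HasFPowerSeriesAt.comp ?_ (hGA k i)
        rw [hGval]; exact hQk
      have h2 : HasFPowerSeriesAt (G k i ∘ (G k i)^[q]) ((GA k i).comp Q) 0 := by
        refine HasFPowerSeriesAt.comp ?_ hQk
        rw [(hiter k i q).2.1]; exact hGA k i
      have hfun : (G k i)^[q] ∘ G k i = G k i ∘ (G k i)^[q] := by
        funext z
        simp only [Function.comp_apply, ← Function.iterate_succ_apply,
          Function.iterate_succ_apply']
      rw [hfun] at h1
      exact h1.eq_formalMultilinearSeries h2
    have hμq : 1 < ‖μ ^ q‖ := by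
      rw [norm_pow]
      exact one_lt_pow₀ hmul (by omega)
    exact seriesext _ _ (formal_key (μ ^ q) (pow_ne_self_of_one_lt_norm hμq) Q Q
      (GA 0 i) (GA 1 i) hQcoeff1 hQcoeff1 (hcoeff0G 0 i) (hcoeff0G 1 i)
      ((hcoeff1G 0 i).trans (hcoeff1G 1 i).symm) (hcommQ 0 hQ) (hcommQ 1 hQ1))
  -- Step 2: conjugation relation forces the f's to agree
  intro i
  have hcommF : ∀ k : Fin 2,
      (GA 0 (i + 1)).comp (FA k i) = (FA k i).comp (GA 0 i) := by
    intro k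
    have h1 : HasFPowerSeriesAt (G k (i + 1) ∘ F k i) ((GA k (i + 1)).comp (FA k i)) 0 := by
      refine HasFPowerSeriesAt.comp ?_ (hFA k i)
      rw [hFval]; exact hGA k (i + 1)
    have h2 : HasFPowerSeriesAt (F k i ∘ G k i) ((FA k i).comp (GA k i)) 0 := by
      refine HasFPowerSeriesAt.comp ?_ (hGA k i)
      rw [hGval]; exact hFA k i
    have hfun : G k (i + 1) ∘ F k i = F k i ∘ G k i := funext (hcomm k i)
    rw [hfun] at h1
    have h3 := h1.eq_formalMultilinearSeries h2
    have hGAk : ∀ j, GA k j = GA 0 j := by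
      fin_cases k
      · intro j; rfl
      · intro j; exact (hstep1 j).symm
    rw [hGAk (i + 1), hGAk i] at h3
    exact h3
  have hFAeq : FA 0 i = FA 1 i :=
    seriesext _ _ (formal_key μ hν (GA 0 (i + 1)) (GA 0 i) (FA 0 i) (FA 1 i)
      (hcoeff1G 0 (i + 1)) (hcoeff1G 0 i) (hcoeff0F 0 i) (hcoeff0F 1 i)
      ((hcoeff1F 0 i).trans (hcoeff1F 1 i).symm) (hcommF 0) (hcommF 1))
  have hFA1' : HasFPowerSeriesAt (F 1 i) (FA 0 i) 0 := by rw [hFAeq]; exact hFA 1 i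
  have hsub : HasFPowerSeriesAt (fun z => F 0 i z - F 1 i z) (FA 0 i - FA 0 i) 0 :=
    (hFA 0 i).sub hFA1'
  rw [sub_self] at hsub
  have hFeq : ∀ᶠ z in 𝓝 (0 : ℂ), F 0 i z - F 1 i z = 0 := hsub.eventually_eq_zero
  have hmap : Tendsto (fun z : ℂ => z - x i) (𝓝 (x i)) (𝓝 0) := by
    have : Continuous (fun z : ℂ => z - x i) := continuous_id.sub continuous_const
    simpa using this.tendsto (x i)
  filter_upwards [hmap.eventually hFeq] with z hz
  have : F 0 i (z - x i) = F 1 i (z - x i) := sub_eq_zero.1 hz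
  simpa [hFdef, hring] using this
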